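/- In a square generalized Sobol' index Σ_r λ_r^T Θ λ_r with Θ_{uv} = μ² + τ̲²_{nxor(u,v)} and τ̲²_w = Σ_{v ⊆ w} σ²_v, the coefficient of σ²_𝒟 is Σ_r Σ_u λ_{r,u}². Equivalently: viewing Σ_r λ_r^T Θ λ_r as a function of the variables (σ²_u)_{u ⊆ 𝒟}, the partial derivative with respect to σ²_𝒟 equals Σ_r Σ_u λ_{r,u}². In particular, a nonzero sum-of-squares GSI cannot be free of σ²_𝒟. -/

import Mathlib

/-- `nxor(u,v) = (u ∩ v) ∪ (uᶜ ∩ vᶜ)`, complements within `𝒟 = {1,…,d}` (modeled by `Fin d`). -/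
def nxor {d : ℕ} (u v : Finset (Fin d)) : Finset (Fin d) := (u ∩ v) ∪ (uᶜ ∩ vᶜ)

lemma nxor_eq_univ_iff {d : ℕ} (u v : Finset (Fin d)) :
    nxor u v = Finset.univ ↔ u = v := by
  rw [Finset.eq_univ_iff_forall, Finset.ext_iff]
  apply forall_congr'
  intro a
  simp only [nxor, Finset.mem_union, Finset.mem_inter, Finset.mem_compl]
  tauto

lemma hasDerivAt_update_univ {d : ℕ} (σ2 : Finset (Fin d) → ℝ) (w : Finset (Fin d)) (t : ℝ) :
    HasDerivAt (fun s : ℝ => Function.update σ2 Finset.univ s w)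
      (if w = Finset.univ then 1 else 0) t := by
  by_cases h : w = Finset.univ
  · subst h
    simp only [Function.update_self, if_pos rfl]
    exact hasDerivAt_id t
  · simp only [Function.update_of_ne h, if_neg h]
    exact hasDerivAt_const t _

set_option maxHeartbeats 1000000 in
/-- The coefficient of `σ²_𝒟` in a sum-of-squares GSI `∑ r, λᵣᵀ Θ λᵣ`, viewed as a function of
the variance components (here of the single variable `σ²_𝒟`, the others held fixed),
is `∑ r ∑ u λ_{r,u}²`. -/
theorem coeff_of_sigma_univ_in_sum_of_squares {d R : ℕ} (hd : 1 ≤ d) (μ : ℝ)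
    (lam : Fin R → Finset (Fin d) → ℝ)
    (σ2 : Finset (Fin d) → ℝ) (h0 : σ2 ∅ = 0) (t : ℝ) :
    HasDerivAt (fun s : ℝ =>
      ∑ r : Fin R, ∑ u : Finset (Fin d), ∑ v : Finset (Fin d),
        lam r u * lam r v *
          (μ ^ 2 + ∑ w ∈ (nxor u v).powerset, Function.update σ2 Finset.univ s w))
      (∑ r : Fin R, ∑ u : Finset (Fin d), (lam r u) ^ 2) t := by
  have key : ∀ (r : Fin R) (u v : Finset (Fin d)),
      HasDerivAt (fun s : ℝ =>
        lam r u * lam r v *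
          (μ ^ 2 + ∑ w ∈ (nxor u v).powerset, Function.update σ2 Finset.univ s w))
        (lam r u * lam r v * (if u = v then 1 else 0)) t := by
    intro r u v
    have h1 : HasDerivAt (fun s : ℝ =>
        ∑ w ∈ (nxor u v).powerset, Function.update σ2 Finset.univ s w)
        (∑ w ∈ (nxor u v).powerset, if w = Finset.univ then (1:ℝ) else 0) t :=
      HasDerivAt.fun_sum (fun w _ => hasDerivAt_update_univ σ2 w t)
    have h2 : (∑ w ∈ (nxor u v).powerset, if w = Finset.univ then (1:ℝ) else 0)
        = if u = v then 1 else 0 := by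
      rw [Finset.sum_ite_eq' (nxor u v).powerset Finset.univ (fun _ => (1:ℝ))]
      simp only [Finset.mem_powerset, Finset.univ_subset_iff, nxor_eq_univ_iff]
    rw [h2] at h1
    exact (h1.const_add (μ ^ 2)).const_mul _
  have h := HasDerivAt.fun_sum (fun r (_ : r ∈ Finset.univ) =>
    HasDerivAt.fun_sum (fun u (_ : u ∈ Finset.univ) =>
      HasDerivAt.fun_sum (fun v (_ : v ∈ Finset.univ) => key r u v)))
  refine h.congr_deriv ?_
  refine Finset.sum_congr rfl fun r _ => Finset.sum_congr rfl fun u _ => ?_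
  simp [mul_ite, Finset.sum_ite_eq, sq]
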